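/- For the solution w_n of the previous item with 0 ≤ b² < 1 fixed, for every fixed t > 0 the L²(unit disk) norms ‖w_n(t,·)‖ tend to infinity as n → ∞, while the initial data (w_n(0), ẇ_n(0)) = (0, e^{-n^{1/4}} z̄ⁿ) tend to 0 in every Hˢ norm. Specifically, ‖e^{-n^{1/4}} sinh(√((1-b²)(n-1)) t) z̄ⁿ‖_{L²(D)}² = (π/(n+1)) e^{-2n^{1/4}} sinh²(√((1-b²)(n-1)) t) → ∞ as n → ∞ for each t > 0. -/

import Mathlib

open MeasureTheory Filter

section IllposednessAux

open Set

private lemma illposed_ball_int (n : ℕ) :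
    ∫ z in Metric.ball (0:ℂ) 1, ‖z‖ ^ (2*n) = Real.pi / ((n:ℝ)+1) := by
  have h1 : ∫ z in Metric.ball (0:ℂ) 1, ‖z‖ ^ (2*n)
      = ∫ z : ℂ, (Set.Iio (1:ℝ)).indicator (fun r => r ^ (2*n)) ‖z‖ := by
    rw [← integral_indicator measurableSet_ball]
    apply integral_congr_ae
    filter_upwards with z
    by_cases hz : z ∈ Metric.ball (0:ℂ) 1
    · rw [Set.indicator_of_mem hz, Set.indicator_of_mem (by simpa [Metric.mem_ball] using hz)]
    · rw [Set.indicator_of_notMem hz, Set.indicator_of_notMem (by simpa [Metric.mem_ball] using hz)]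
  rw [h1, integral_fun_norm_addHaar volume (fun r => (Set.Iio (1:ℝ)).indicator (fun r => r ^ (2*n)) r)]
  have hdim : Module.finrank ℝ ℂ = 2 := Complex.finrank_real_complex
  rw [hdim]
  have hvol : (volume (Metric.ball (0:ℂ) 1)).toReal = Real.pi := by
    simp [Complex.volume_ball]
  rw [measureReal_def, hvol]
  have h2 : ∫ y in Ioi (0:ℝ), y ^ (2-1) • (Set.Iio (1:ℝ)).indicator (fun r => r ^ (2*n)) y
      = ∫ y in Ioo (0:ℝ) 1, y ^ (2*n+1) := by
    rw [← integral_indicator measurableSet_Ioo]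
    rw [← integral_indicator measurableSet_Ioi]
    apply integral_congr_ae
    filter_upwards with y
    by_cases hy : y ∈ Set.Iio (1:ℝ) <;> by_cases hy0 : y ∈ Set.Ioi (0:ℝ)
    · rw [Set.indicator_of_mem hy0, Set.indicator_of_mem hy,
        Set.indicator_of_mem (show y ∈ Set.Ioo (0:ℝ) 1 from ⟨hy0, hy⟩)]
      simp [smul_eq_mul, pow_succ]; ring
    · rw [Set.indicator_of_notMem hy0,
        Set.indicator_of_notMem (fun h => hy0 h.1)]
    · rw [Set.indicator_of_mem hy0, Set.indicator_of_notMem hy,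
        Set.indicator_of_notMem (fun h => hy h.2)]
      simp
    · rw [Set.indicator_of_notMem hy0,
        Set.indicator_of_notMem (fun h => hy0 h.1)]
  rw [h2]
  have h3 : ∫ y in Ioo (0:ℝ) 1, y ^ (2*n+1) = 1 / (2*(n:ℝ)+2) := by
    rw [← integral_Ioc_eq_integral_Ioo, ← intervalIntegral.integral_of_le (by norm_num)]
    rw [integral_pow]
    push_cast
    ring
  rw [h3]
  rw [nsmul_eq_mul, smul_eq_mul]
  have : ((n:ℝ)+1) ≠ 0 := by positivity
  have : (2*(n:ℝ)+2) ≠ 0 := by positivity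
  field_simp
  ring

private lemma illposed_exp_combine (s u' : ℝ) :
    Real.pi * Real.exp (-(8*u')) * Real.exp (-u') ^ 2 * (Real.exp s / 4) ^ 2
      = Real.pi / 16 * (Real.exp (s - 5*u') * Real.exp (s - 5*u')) := by
  have e1 : Real.exp (-u') ^ 2 = Real.exp (-(2*u')) := by
    rw [← Real.exp_nat_mul]; norm_num
  have e2 : (Real.exp s / 4) ^ 2 = Real.exp (2*s) / 16 := by
    rw [div_pow, ← Real.exp_nat_mul]; norm_num
  have e3 : Real.exp (-(8*u')) * Real.exp (-(2*u')) * Real.exp (2*s)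
      = Real.exp (2*s - 10*u') := by
    rw [← Real.exp_add, ← Real.exp_add]; congr 1; ring
  have e4 : Real.exp (s - 5*u') * Real.exp (s - 5*u') = Real.exp (2*s - 10*u') := by
    rw [← Real.exp_add]; congr 1; ring
  rw [e1, e2, e4, ← e3]; ring

private lemma illposed_part2 (b t : ℝ) (hb : b ^ 2 < 1) (ht : 0 < t) :
    Tendsto (fun n : ℕ =>
        Real.pi / ((n : ℝ) + 1) * (Real.exp (-(n : ℝ) ^ ((1 : ℝ) / 4))) ^ 2
          * (Real.sinh (Real.sqrt ((1 - b ^ 2) * ((n : ℝ) - 1)) * t)) ^ 2)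
      atTop atTop := by
  have h1b2 : (0:ℝ) ≤ 1 - b ^ 2 := by linarith
  set c := Real.sqrt (1 - b ^ 2) with hc_def
  have hc : 0 < c := Real.sqrt_pos.2 (by linarith)
  set a := c * t / Real.sqrt 2 with ha_def
  have ha : 0 < a := by positivity
  set u : ℕ → ℝ := fun n => (n:ℝ) ^ ((1:ℝ)/4) with hu_def
  have hu : Tendsto u atTop atTop :=
    (tendsto_rpow_atTop (by norm_num)).comp tendsto_natCast_atTop_atTop
  set g : ℕ → ℝ := fun n => Real.exp (a * Real.sqrt n - 5 * u n) with hg_def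
  have hg : Tendsto g atTop atTop := by
    apply (Real.tendsto_exp_atTop.comp
      (Tendsto.atTop_mul_atTop₀ hu
        (tendsto_atTop_add_const_right _ (-5) (hu.const_mul_atTop ha)))).congr'
    filter_upwards [eventually_ge_atTop 1] with n hn
    have hn0 : (0:ℝ) < (n:ℝ) := by exact_mod_cast hn
    simp only [Function.comp_apply, hg_def]
    congr 1
    have : Real.sqrt (n:ℝ) = u n * u n := by
      rw [Real.sqrt_eq_rpow, hu_def]
      rw [← Real.rpow_add hn0]; norm_num
    rw [this]; ring
  have hL : Tendsto (fun n => Real.pi / 16 * (g n * g n)) atTop atTop :=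
    (hg.atTop_mul_atTop₀ hg).const_mul_atTop (by positivity)
  have hx : Tendsto (fun n : ℕ => Real.sqrt ((1 - b ^ 2) * ((n:ℝ) - 1)) * t) atTop atTop := by
    have h2 : Tendsto (fun n : ℕ => Real.sqrt ((1 - b ^ 2) * ((n:ℝ) - 1))) atTop atTop := by
      have hsq : Tendsto Real.sqrt atTop atTop := by
        apply (tendsto_rpow_atTop (by norm_num : (0:ℝ) < 1/2)).congr
        intro y; exact (Real.sqrt_eq_rpow y).symm
      apply hsq.comp
      apply Tendsto.const_mul_atTop (by linarith : (0:ℝ) < 1 - b ^ 2)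
      exact tendsto_atTop_add_const_right _ (-1) tendsto_natCast_atTop_atTop
    exact h2.atTop_mul_const ht
  apply tendsto_atTop_mono' atTop _ hL
  filter_upwards [eventually_ge_atTop 2, hx.eventually_ge_atTop 1] with n hn2 hx1
  set x := Real.sqrt ((1 - b ^ 2) * ((n:ℝ) - 1)) * t with hx_def
  have hn0 : (0:ℝ) < (n:ℝ) := by
    have : (0:ℕ) < n := by omega
    exact_mod_cast this
  have hn1 : (1:ℝ) ≤ (n:ℝ) := by
    have : (1:ℕ) ≤ n := by omega
    exact_mod_cast this
  have hun : u n ^ 4 = (n:ℝ) := by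
    rw [hu_def, ← Real.rpow_natCast ((n:ℝ) ^ ((1:ℝ)/4)) 4, ← Real.rpow_mul hn0.le]
    norm_num
  have hu0 : 0 ≤ u n := Real.rpow_nonneg hn0.le _
  have hnexp : (n:ℝ) + 1 ≤ Real.exp (8 * u n) := by
    have h16 : (2 * u n) ^ 4 = 16 * (n:ℝ) := by rw [show (2*u n)^4 = 16 * u n ^4 by ring, hun]
    have hle : (2 * u n) ^ 4 ≤ Real.exp (2 * u n) ^ 4 := by
      apply pow_le_pow_left₀ (by positivity)
      linarith [Real.add_one_le_exp (2 * u n)]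
    rw [← Real.exp_nat_mul] at hle
    have : (2 * u n) ^ 4 ≤ Real.exp (8 * u n) := by
      convert hle using 2; push_cast; ring
    rw [h16] at this
    linarith
  have hfrac : Real.pi * Real.exp (-(8 * u n)) ≤ Real.pi / ((n:ℝ) + 1) := by
    rw [div_eq_mul_inv, Real.exp_neg]
    apply mul_le_mul_of_nonneg_left _ Real.pi_pos.le
    apply inv_anti₀ (by positivity) hnexp
  have hxan : a * Real.sqrt n ≤ x := by
    rw [hx_def, Real.sqrt_mul h1b2, ha_def]
    have h2' : Real.sqrt ((n:ℝ)/2) ≤ Real.sqrt ((n:ℝ) - 1) := by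
      apply Real.sqrt_le_sqrt
      have : (2:ℝ) ≤ (n:ℝ) := by exact_mod_cast hn2
      linarith
    have h3 : Real.sqrt (n:ℝ) / Real.sqrt 2 ≤ Real.sqrt ((n:ℝ) - 1) := by
      rw [← Real.sqrt_div hn0.le 2]; exact h2'
    calc c * t / Real.sqrt 2 * Real.sqrt (n:ℝ)
        = (c * t) * (Real.sqrt (n:ℝ) / Real.sqrt 2) := by ring
      _ ≤ (c * t) * Real.sqrt ((n:ℝ) - 1) :=
          mul_le_mul_of_nonneg_left h3 (by positivity)
      _ = c * Real.sqrt ((n:ℝ) - 1) * t := by ring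
  have hsinh : Real.exp x / 4 ≤ Real.sinh x := by
    rw [Real.sinh_eq]
    have h1 : Real.exp (-x) ≤ 1 := Real.exp_le_one_iff.2 (by linarith)
    have h2 : (2:ℝ) ≤ Real.exp x := by
      have := Real.add_one_le_exp (1:ℝ)
      have h3 : Real.exp 1 ≤ Real.exp x := Real.exp_le_exp.2 hx1
      linarith
    linarith
  have hs2 : (Real.exp (a * Real.sqrt n) / 4) ^ 2 ≤ Real.sinh x ^ 2 := by
    apply pow_le_pow_left₀ (by positivity)
    calc Real.exp (a * Real.sqrt n) / 4 ≤ Real.exp x / 4 := by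
          gcongr
      _ ≤ Real.sinh x := hsinh
  calc Real.pi / 16 * (g n * g n)
      = Real.pi * Real.exp (-(8 * u n)) * Real.exp (-u n) ^ 2
          * (Real.exp (a * Real.sqrt n) / 4) ^ 2 := (illposed_exp_combine _ _).symm
    _ ≤ Real.pi / ((n:ℝ) + 1) * Real.exp (-u n) ^ 2 * Real.sinh x ^ 2 := by
        apply mul_le_mul _ hs2 (by positivity) (by positivity)
        exact mul_le_mul_of_nonneg_right hfrac (by positivity)
    _ = Real.pi / ((n:ℝ) + 1) * (Real.exp (-(n:ℝ) ^ ((1:ℝ)/4))) ^ 2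
          * (Real.sinh (Real.sqrt ((1 - b ^ 2) * ((n:ℝ) - 1)) * t)) ^ 2 := rfl

private lemma illposed_part3 (k : ℕ) :
    Tendsto (fun n : ℕ => (n : ℝ) ^ k * Real.exp (-(n : ℝ) ^ ((1 : ℝ) / 4)))
      atTop (nhds 0) := by
  have h1 : Tendsto (fun n : ℕ => ((n:ℝ) ^ ((1:ℝ)/4))) atTop atTop :=
    (tendsto_rpow_atTop (by norm_num)).comp tendsto_natCast_atTop_atTop
  have h2 := (Real.tendsto_pow_mul_exp_neg_atTop_nhds_zero (4*k)).comp h1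
  apply h2.congr'
  filter_upwards [eventually_ge_atTop 1] with n hn
  have hn0 : (0:ℝ) ≤ (n:ℝ) := by positivity
  simp only [Function.comp_apply]
  congr 1
  rw [← Real.rpow_natCast ((n:ℝ) ^ ((1:ℝ)/4)) (4*k), ← Real.rpow_mul hn0,
    ← Real.rpow_natCast (n:ℝ) k]
  congr 1
  push_cast
  ring

end IllposednessAux

/-- For fixed `t > 0` the L² norms on the unit disk of
`e^{-n^{1/4}} sinh(√((1-b²)(n-1)) t) z̄ⁿ` are given by the explicit formula
`(π/(n+1)) e^{-2n^{1/4}} sinh²(√((1-b²)(n-1)) t)` and tend to infinity as `n → ∞`,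
while the initial data decay faster than any power of `n` (hence tend to `0` in every
Sobolev norm). -/
theorem illposedness_growth (b t : ℝ) (hb : b ^ 2 < 1) (ht : 0 < t) :
    (∀ n : ℕ,
      (∫ z in Metric.ball (0 : ℂ) 1,
        ‖((Real.exp (-(n : ℝ) ^ ((1 : ℝ) / 4))
            * Real.sinh (Real.sqrt ((1 - b ^ 2) * ((n : ℝ) - 1)) * t) : ℝ) : ℂ)
          * (starRingEnd ℂ z) ^ n‖ ^ 2)
        = Real.pi / ((n : ℝ) + 1) * (Real.exp (-(n : ℝ) ^ ((1 : ℝ) / 4))) ^ 2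
            * (Real.sinh (Real.sqrt ((1 - b ^ 2) * ((n : ℝ) - 1)) * t)) ^ 2) ∧
    Tendsto (fun n : ℕ =>
        Real.pi / ((n : ℝ) + 1) * (Real.exp (-(n : ℝ) ^ ((1 : ℝ) / 4))) ^ 2
          * (Real.sinh (Real.sqrt ((1 - b ^ 2) * ((n : ℝ) - 1)) * t)) ^ 2)
      atTop atTop ∧
    (∀ k : ℕ, Tendsto (fun n : ℕ => (n : ℝ) ^ k * Real.exp (-(n : ℝ) ^ ((1 : ℝ) / 4)))
      atTop (nhds 0)) := by
  refine ⟨?_, illposed_part2 b t hb ht, fun k => illposed_part3 k⟩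
  intro n
  set E := Real.exp (-(n : ℝ) ^ ((1 : ℝ) / 4)) with hE
  set S := Real.sinh (Real.sqrt ((1 - b ^ 2) * ((n : ℝ) - 1)) * t) with hS
  have hpt : ∀ z : ℂ, ‖(((E * S : ℝ)) : ℂ) * (starRingEnd ℂ z) ^ n‖ ^ 2
      = (E * S) ^ 2 * ‖z‖ ^ (2 * n) := by
    intro z
    rw [norm_mul, norm_pow, Complex.norm_real, RCLike.norm_conj]
    rw [mul_pow, ← pow_mul, Real.norm_eq_abs, sq_abs, mul_comm n 2]
  calc (∫ z in Metric.ball (0 : ℂ) 1, ‖(((E * S : ℝ)) : ℂ) * (starRingEnd ℂ z) ^ n‖ ^ 2)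
      = ∫ z in Metric.ball (0 : ℂ) 1, (E * S) ^ 2 * ‖z‖ ^ (2 * n) := by
        apply integral_congr_ae
        filter_upwards with z using hpt z
    _ = (E * S) ^ 2 * ∫ z in Metric.ball (0 : ℂ) 1, ‖z‖ ^ (2 * n) := integral_const_mul _ _
    _ = (E * S) ^ 2 * (Real.pi / ((n:ℝ) + 1)) := by rw [illposed_ball_int n]
    _ = Real.pi / ((n : ℝ) + 1) * E ^ 2 * S ^ 2 := by ring
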